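/- arXiv:2401.14552 — 3 statements merged into one kernel-verified Lean document; each statement's English description precedes it below -/
import Mathlib

section
/- Let m be a natural number with 1 < m < ω and Q ⊆ P a nonempty subset of a forcing notion. If int(Q) ≥ 1 − 1/(m+1), then Q is m-linked, i.e., every subset of Q of size at most m has a lower bound in P. -/
/-- The intersection index `i_*(q̄)`: the maximal size of a set `F ⊆ n` such that
`{q i : i ∈ F}` has a lower bound in `P`. -/
noncomputable def iStar {P : Type*} [Preorder P] {n : ℕ} (q : Fin n → P) : ℕ :=
  sSup {k | ∃ F : Finset (Fin n), (∃ r, ∀ i ∈ F, r ≤ q i) ∧ F.card = k}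

/-- The intersection number of `Q` in the forcing notion `P`:
`inf { i_*(q̄)/n : q̄ ∈ Qⁿ, n ≥ 1 }`. -/
noncomputable def intNum (P : Type*) [Preorder P] (Q : Set P) : ℝ :=
  sInf {x | ∃ n : ℕ, 0 < n ∧ ∃ q : Fin n → P, (∀ i, q i ∈ Q) ∧ x = (iStar q : ℝ) / n}

theorem linked_of_intNum_ge {P : Type*} [Preorder P] (Q : Set P) (hQ : Q.Nonempty)
    (m : ℕ) (hm : 1 < m)
    (h : 1 - 1 / ((m : ℝ) + 1) ≤ intNum P Q) :
    ∀ S : Finset P, ↑S ⊆ Q → S.card ≤ m → ∃ r, ∀ a ∈ S, r ≤ a := by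
  intro S hSQ hSm
  obtain ⟨r0, hr0⟩ := hQ
  rcases Nat.eq_zero_or_pos S.card with h0 | hpos
  · exact ⟨r0, fun a ha => absurd ha (by simp [Finset.card_eq_zero.mp h0])⟩
  set n := S.card with hn
  set q : Fin n → P := fun i => (S.equivFin.symm i : P) with hq
  have hqQ : ∀ i, q i ∈ Q := fun i => hSQ (S.equivFin.symm i).2
  have hbdd : BddBelow {x | ∃ n : ℕ, 0 < n ∧ ∃ q : Fin n → P,
      (∀ i, q i ∈ Q) ∧ x = (iStar q : ℝ) / n} := by
    refine ⟨0, ?_⟩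
    rintro x ⟨k, hk, p, _, rfl⟩
    positivity
  have hle : intNum P Q ≤ (iStar q : ℝ) / n :=
    csInf_le hbdd ⟨n, hpos, q, hqQ, rfl⟩
  have h1 : 1 - 1 / ((m : ℝ) + 1) ≤ (iStar q : ℝ) / n := le_trans h hle
  have hnpos : (0:ℝ) < n := by exact_mod_cast hpos
  have h2 : (1 - 1 / ((m : ℝ) + 1)) * n ≤ (iStar q : ℝ) :=
    (le_div_iff₀ hnpos).mp h1
  have hmpos : (0:ℝ) < (m:ℝ) + 1 := by positivity
  have hnm : (n:ℝ) ≤ m := by exact_mod_cast hSm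
  have hn1 : (1:ℝ) ≤ n := by exact_mod_cast hpos
  have hcancel : (1 / ((m:ℝ)+1)) * ((m:ℝ)+1) = 1 := by field_simp
  have h3 : (n:ℝ) - 1 < (iStar q : ℝ) := by nlinarith
  have h4 : n ≤ iStar q := by
    have h5 : (n:ℝ) < (iStar q : ℝ) + 1 := by linarith
    have h6 : n < iStar q + 1 := by exact_mod_cast h5
    omega
  have hsetne : {k | ∃ F : Finset (Fin n), (∃ r, ∀ i ∈ F, r ≤ q i) ∧ F.card = k}.Nonempty :=
    ⟨0, ∅, ⟨r0, fun i hi => absurd hi (Finset.notMem_empty i)⟩, rfl⟩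
  have hsetbdd : BddAbove {k | ∃ F : Finset (Fin n), (∃ r, ∀ i ∈ F, r ≤ q i) ∧ F.card = k} := by
    refine ⟨n, ?_⟩
    rintro k ⟨F, _, rfl⟩
    simpa using F.card_le_univ
  obtain ⟨F, ⟨r, hr⟩, hFcard⟩ := Nat.sSup_mem hsetne hsetbdd
  have hFcard' : F.card = iStar q := hFcard
  have hFn : F.card = n := by
    have : F.card ≤ n := by simpa using F.card_le_univ
    omega
  have hFuniv : F = Finset.univ := Finset.eq_univ_of_card F (by simpa using hFn)
  refine ⟨r, fun a ha => ?_⟩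
  have : q (S.equivFin ⟨a, ha⟩) = a := by simp [hq]
  rw [← this]
  exact hr _ (hFuniv ▸ Finset.mem_univ _)
end

section
/- μ-intersection-linkedness is hereditary under complete embeddings: if ι : P → Q is a complete embedding of forcing notions and Q is μ-intersection-linked, then P is μ-intersection-linked; moreover, if ι is a dense embedding and P is μ-intersection-linked, then Q is μ-intersection-linked. -/
/-- Compatibility in a preorder. -/
def Compat {P : Type*} [Preorder P] (p q : P) : Prop := ∃ r, r ≤ p ∧ r ≤ q

/-- `P` is intersection-linked with witnessing sets indexed by `I`. -/
def IntLinked (P : Type*) [Preorder P] (I : Type*) : Prop :=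
  ∃ Q : I → ℚ → Set P,
    (∀ i, ∀ ε : ℚ, 0 < ε → ε < 1 → (1 - (ε : ℝ)) ≤ intNum P (Q i ε)) ∧
    (∀ ε : ℚ, 0 < ε → ε < 1 → ∀ p : P, ∃ q, (∃ i, q ∈ Q i ε) ∧ q ≤ p)

lemma iStar_le_iStar {P Q : Type*} [Preorder P] [Preorder Q] {n : ℕ}
    (q : Fin n → Q) (p : Fin n → P)
    (H : ∀ F : Finset (Fin n), (∃ s, ∀ j ∈ F, s ≤ q j) → ∃ t, ∀ j ∈ F, t ≤ p j) :
    iStar q ≤ iStar p := by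
  apply csSup_le_csSup'
  · exact ⟨n, fun k ⟨F, _, hF⟩ => hF ▸ (Finset.card_le_univ F).trans_eq (by simp)⟩
  · rintro k ⟨F, hF, rfl⟩
    exact ⟨F, H F hF, rfl⟩
lemma intNum_bddBelow (P : Type*) [Preorder P] (S : Set P) :
    BddBelow {x | ∃ n : ℕ, 0 < n ∧ ∃ q : Fin n → P, (∀ i, q i ∈ S) ∧ x = (iStar q : ℝ) / n} := by
  refine ⟨0, ?_⟩
  rintro x ⟨n, hn, q, hq, rfl⟩
  positivity
lemma intNum_le {P : Type*} [Preorder P] (S : Set P) {n : ℕ} (hn : 0 < n)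
    (q : Fin n → P) (hq : ∀ i, q i ∈ S) : intNum P S ≤ (iStar q : ℝ) / n :=
  csInf_le (intNum_bddBelow P S) ⟨n, hn, q, hq, rfl⟩
lemma nonempty_of_le_intNum {P : Type*} [Preorder P] {S : Set P} {c : ℝ}
    (hc : 0 < c) (h : c ≤ intNum P S) : S.Nonempty := by
  by_contra hS
  rw [Set.not_nonempty_iff_eq_empty] at hS
  have : {x | ∃ n : ℕ, 0 < n ∧ ∃ q : Fin n → P, (∀ i, q i ∈ S) ∧ x = (iStar q : ℝ) / n} = ∅ := by
    ext x
    simp only [Set.mem_setOf_eq, Set.mem_empty_iff_false, iff_false]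
    rintro ⟨n, hn, q, hq, -⟩
    exact absurd (hq ⟨0, hn⟩) (by simp [hS])
  rw [intNum, this, Real.sInf_empty] at h
  linarith

-- key: finitely many conditions whose images lie above s have a common lower bound
lemma exists_common_lb {P Q : Type*} [Preorder P] [Preorder Q] (ι : P → Q)
    (hcompat : ∀ a b : P, Compat a b ↔ Compat (ι a) (ι b))
    {s : Q} {r₀ : P} (hr : ∀ r' ≤ r₀, Compat (ι r') s)
    {n : ℕ} (p : Fin n → P) (F : Finset (Fin n)) (hs : ∀ j ∈ F, s ≤ ι (p j)) :
    ∃ t, t ≤ r₀ ∧ ∀ j ∈ F, t ≤ p j := by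
  induction F using Finset.induction_on with
  | empty => exact ⟨r₀, le_refl _, by simp⟩
  | @insert j F hj ih =>
    obtain ⟨t, htr, htF⟩ := ih (fun k hk => hs k (Finset.mem_insert_of_mem hk))
    obtain ⟨u, hu1, hu2⟩ := hr t htr
    have hc : Compat t (p j) :=
      (hcompat _ _).mpr ⟨u, hu1, hu2.trans (hs j (Finset.mem_insert_self _ _))⟩
    obtain ⟨t', ht'1, ht'2⟩ := hc
    refine ⟨t', ht'1.trans htr, fun k hk => ?_⟩
    rcases Finset.mem_insert.mp hk with rfl | hk
    · exact ht'2
    · exact ht'1.trans (htF k hk)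

-- Part 1 intNum transfer
lemma part1_int {P Q : Type*} [Preorder P] [Preorder Q] (ι : P → Q)
    (hcompat : ∀ a b : P, Compat a b ↔ Compat (ι a) (ι b))
    (hred : ∀ q : Q, ∃ r : P, ∀ r' ≤ r, Compat (ι r') q)
    (T : Set Q) {c : ℝ} (hT : c ≤ intNum Q T)
    (hne : (ι ⁻¹' {q | ∃ t ∈ T, t ≤ q}).Nonempty) :
    c ≤ intNum P (ι ⁻¹' {q | ∃ t ∈ T, t ≤ q}) := by
  obtain ⟨p₀, hp₀⟩ := hne
  refine le_csInf ⟨(iStar (fun _ : Fin 1 => p₀) : ℝ) / 1, 1, one_pos, fun _ => p₀, fun _ => hp₀, by norm_num⟩ ?_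
  rintro x ⟨n, hn, p, hp, rfl⟩
  choose q' hq'T hq'le using fun j => hp j
  have h1 : iStar q' ≤ iStar p := by
    apply iStar_le_iStar
    rintro F ⟨s, hsF⟩
    obtain ⟨r₀, hr₀⟩ := hred s
    obtain ⟨t, -, ht⟩ := exists_common_lb ι hcompat hr₀ p F
      (fun j hj => (hsF j hj).trans (hq'le j))
    exact ⟨t, ht⟩
  calc c ≤ intNum Q T := hT
    _ ≤ (iStar q' : ℝ) / n := intNum_le T hn q' hq'T
    _ ≤ (iStar p : ℝ) / n := by gcongr

-- Part 2 intNum transfer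
lemma part2_int {P Q : Type*} [Preorder P] [Preorder Q] (ι : P → Q)
    (hmono : ∀ a b : P, a ≤ b → ι a ≤ ι b)
    (R : Set P) {c : ℝ} (hR : c ≤ intNum P R) (hRne : R.Nonempty) :
    c ≤ intNum Q {q | ∃ p ∈ R, ι p ≤ q} := by
  obtain ⟨p₀, hp₀⟩ := hRne
  refine le_csInf ⟨(iStar (fun _ : Fin 1 => ι p₀) : ℝ) / 1, 1, one_pos, fun _ => ι p₀,
    fun _ => ⟨p₀, hp₀, le_refl _⟩, by norm_num⟩ ?_
  rintro x ⟨n, hn, q, hq, rfl⟩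
  choose p hpR hple using fun j => hq j
  have h1 : iStar p ≤ iStar q := by
    apply iStar_le_iStar
    rintro F ⟨t, htF⟩
    exact ⟨ι t, fun j hj => (hmono _ _ (htF j hj)).trans (hple j)⟩
  calc c ≤ intNum P R := hR
    _ ≤ (iStar p : ℝ) / n := intNum_le R hn p hpR
    _ ≤ (iStar q : ℝ) / n := by gcongr

theorem intLinked_hereditary {P Q : Type*} [Preorder P] [Preorder Q] (I : Type*)
    (ι : P → Q)
    (hmono : ∀ a b : P, a ≤ b → ι a ≤ ι b)
    (hcompat : ∀ a b : P, Compat a b ↔ Compat (ι a) (ι b)) :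
    ((∀ q : Q, ∃ r : P, ∀ r' ≤ r, Compat (ι r') q) →
      IntLinked Q I → IntLinked P I) ∧
    ((∀ q : Q, ∃ p : P, ι p ≤ q) →
      IntLinked P I → IntLinked Q I) := by
  constructor
  · -- Part 1: complete embedding, downward heredity
    intro hred hQL
    obtain ⟨Q', hQ1, hQ2⟩ := hQL
    by_cases hP : Nonempty P
    · classical
      obtain ⟨p₀⟩ := hP
      set pre : I → ℚ → Set P := fun j ε => ι ⁻¹' {q | ∃ t ∈ Q' j ε, t ≤ q} with hpre
      refine ⟨fun i ε => if (pre i ε).Nonempty then pre i ε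
        else if h : ∃ j, (pre j ε).Nonempty then pre h.choose ε else ∅, ?_, ?_⟩
      · intro i ε hε1 hε2
        show 1 - (ε : ℝ) ≤ intNum P (if (pre i ε).Nonempty then pre i ε
          else if h : ∃ j, (pre j ε).Nonempty then pre h.choose ε else ∅)
        have hex : ∃ j, (pre j ε).Nonempty := by
          obtain ⟨q, ⟨j, hqj⟩, hqle⟩ := hQ2 ε hε1 hε2 (ι p₀)
          exact ⟨j, p₀, q, hqj, hqle⟩
        by_cases hi : (pre i ε).Nonempty
        · rw [if_pos hi]
          exact part1_int ι hcompat hred (Q' i ε) (hQ1 i ε hε1 hε2) hi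
        · rw [if_neg hi, dif_pos hex]
          exact part1_int ι hcompat hred (Q' hex.choose ε) (hQ1 hex.choose ε hε1 hε2)
            hex.choose_spec
      · intro ε hε1 hε2 p
        obtain ⟨q, ⟨j, hqj⟩, hqle⟩ := hQ2 ε hε1 hε2 (ι p)
        have hpj : p ∈ pre j ε := ⟨q, hqj, hqle⟩
        refine ⟨p, ⟨j, ?_⟩, le_refl p⟩
        show p ∈ (if (pre j ε).Nonempty then pre j ε
          else if h : ∃ k, (pre k ε).Nonempty then pre h.choose ε else ∅)
        rw [if_pos ⟨p, hpj⟩]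
        exact hpj
    · -- P empty
      have hQe : ∀ q : Q, False := fun q => hP ⟨(hred q).choose⟩
      have hIe : ∀ i : I, False := by
        intro i
        have h := hQ1 i (1/2) (by norm_num) (by norm_num)
        have he : {x | ∃ n : ℕ, 0 < n ∧ ∃ q : Fin n → Q,
            (∀ k, q k ∈ Q' i (1/2)) ∧ x = (iStar q : ℝ) / n} = ∅ := by
          ext x
          simp only [Set.mem_setOf_eq, Set.mem_empty_iff_false, iff_false]
          rintro ⟨n, hn, q, -, -⟩
          exact hQe (q ⟨0, hn⟩)
        rw [intNum, he, Real.sInf_empty] at h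
        norm_num at h
      exact ⟨fun _ _ => ∅, fun i => absurd trivial (fun _ => hIe i),
        fun ε _ _ p => absurd trivial (fun _ => hP ⟨p⟩)⟩
  · -- Part 2: dense embedding, upward transfer
    intro hdense hPL
    obtain ⟨R, hR1, hR2⟩ := hPL
    refine ⟨fun i ε => {q | ∃ p ∈ R i ε, ι p ≤ q}, ?_, ?_⟩
    · intro i ε hε1 hε2
      have hne : (R i ε).Nonempty :=
        nonempty_of_le_intNum (c := 1 - (ε : ℝ))
          (by rw [sub_pos]; exact_mod_cast hε2) (hR1 i ε hε1 hε2)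
      exact part2_int ι hmono (R i ε) (hR1 i ε hε1 hε2) hne
    · intro ε hε1 hε2 q
      obtain ⟨p, hpq⟩ := hdense q
      obtain ⟨p', ⟨i, hi⟩, hp'⟩ := hR2 ε hε1 hε2 p
      exact ⟨ι p', ⟨i, ⟨p', hi, le_refl _⟩⟩, (hmono _ _ hp').trans hpq⟩
end

section
/- Every μ-intersection-linked forcing notion is μ-m-linked for every natural number m > 0: P can be covered by μ-many m-linked sets whose union is all of P. -/
lemma key_lemma {P : Type*} [Preorder P] [Nonempty P] {Q' : Set P} {m : ℕ}
    (hm : 0 < m) (h : (1 - ((1 / (m + 1) : ℚ) : ℝ)) ≤ intNum P Q')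
    {n : ℕ} (hn : 0 < n) (hnm : n ≤ m)
    (q : Fin n → P) (hq : ∀ j, q j ∈ Q') : ∃ r, ∀ j, r ≤ q j := by
  set K := {k | ∃ F : Finset (Fin n), (∃ r, ∀ i ∈ F, r ≤ q i) ∧ F.card = k} with hK
  have h0 : 0 ∈ K := ⟨∅, ⟨Classical.arbitrary P, by simp⟩, rfl⟩
  have hbdd : ∀ k ∈ K, k ≤ n := by
    rintro k ⟨F, _, rfl⟩
    simpa using F.card_le_univ
  have hmem : iStar q ∈ K := Nat.sSup_mem ⟨0, h0⟩ ⟨n, hbdd⟩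
  -- intNum ≤ iStar q / n
  have hle : intNum P Q' ≤ (iStar q : ℝ) / n := by
    apply csInf_le
    · refine ⟨0, ?_⟩
      rintro x ⟨k, hk, p, _, rfl⟩
      positivity
    · exact ⟨n, hn, q, hq, rfl⟩
  have h1 : (1 - ((1 / (m + 1) : ℚ) : ℝ)) ≤ (iStar q : ℝ) / n := h.trans hle
  have hnR : (0 : ℝ) < n := by exact_mod_cast hn
  have h2 : (n : ℝ) - (n : ℝ) / (m + 1) ≤ (iStar q : ℝ) := by
    have := mul_le_mul_of_nonneg_left h1 hnR.le
    rw [mul_div_cancel₀ _ hnR.ne'] at this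
    push_cast at this ⊢
    rw [mul_sub, mul_one, mul_one_div] at this
    linarith
  have h3 : (n : ℝ) / (m + 1) < 1 := by
    rw [div_lt_one (by positivity)]
    have : (n : ℝ) ≤ m := by exact_mod_cast hnm
    linarith
  have h4 : n ≤ iStar q := by
    have : (n : ℝ) < (iStar q : ℝ) + 1 := by linarith
    have := Nat.cast_lt.mp (by exact_mod_cast this : (n : ℝ) < ((iStar q + 1 : ℕ) : ℝ))
    omega
  obtain ⟨F, ⟨r, hr⟩, hcard⟩ := hmem
  have hFcard : F.card = n := le_antisymm (by simpa using F.card_le_univ) (hcard ▸ h4)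
  have hFuniv : F = Finset.univ := Finset.eq_univ_of_card F (by simpa using hFcard)
  exact ⟨r, fun j => hr j (hFuniv ▸ Finset.mem_univ j)⟩

theorem intLinked_implies_mLinked {P : Type*} [Preorder P] {I : Type*}
    (Q : I → ℚ → Set P)
    (hint : ∀ i, ∀ ε : ℚ, 0 < ε → ε < 1 → (1 - (ε : ℝ)) ≤ intNum P (Q i ε))
    (hdense : ∀ ε : ℚ, 0 < ε → ε < 1 → ∀ p : P, ∃ q, (∃ i, q ∈ Q i ε) ∧ q ≤ p) :
    ∀ m : ℕ, 0 < m → ∃ R : I → Set P,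
      (⋃ i, R i) = Set.univ ∧
      (∀ i, ∀ S : Finset P, ↑S ⊆ R i → S.card ≤ m → ∃ r, ∀ a ∈ S, r ≤ a) := by
  intro m hm
  rcases isEmpty_or_nonempty P with hP | hP
  · -- P empty: I must be empty, else hint contradicts intNum of empty set = 0
    have hI : IsEmpty I := by
      constructor
      intro i
      have := hint i (1/2) (by norm_num) (by norm_num)
      have hempty : {x | ∃ n : ℕ, 0 < n ∧ ∃ q : Fin n → P,
          (∀ j, q j ∈ Q i (1/2)) ∧ x = (iStar q : ℝ) / n} = ∅ := by
        ext x
        simp only [Set.mem_setOf_eq, Set.mem_empty_iff_false, iff_false]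
        rintro ⟨n, hn, q, _⟩
        exact hP.elim (q ⟨0, hn⟩)
      rw [intNum, hempty, Real.sInf_empty] at this
      norm_num at this
    refine ⟨fun _ => ∅, ?_, fun i => hI.elim i⟩
    rw [Set.iUnion_of_empty]
    exact (Set.univ_eq_empty_iff.mpr hP).symm
  · -- main case
    set ε : ℚ := 1 / (m + 1) with hε
    have hε0 : 0 < ε := by positivity
    have hε1 : ε < 1 := by
      rw [hε, div_lt_one (by positivity)]
      have : (1 : ℚ) ≤ m := by exact_mod_cast hm
      linarith
    refine ⟨fun i => {p | ∃ q ∈ Q i ε, q ≤ p}, ?_, ?_⟩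
    · ext p
      simp only [Set.mem_iUnion, Set.mem_univ, iff_true, Set.mem_setOf_eq]
      obtain ⟨q, ⟨i, hqi⟩, hqp⟩ := hdense ε hε0 hε1 p
      exact ⟨i, q, hqi, hqp⟩
    · intro i S hS hScard
      rcases eq_or_ne S ∅ with rfl | hSne
      · exact ⟨Classical.arbitrary P, by simp⟩
      · have hn : 0 < S.card := Finset.card_pos.mpr (Finset.nonempty_of_ne_empty hSne)
        -- choose witnesses
        have hch : ∀ a : S, ∃ q ∈ Q i ε, q ≤ (a : P) := fun a => hS a.2
        choose w hw1 hw2 using hch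
        set e := S.equivFin
        set q : Fin S.card → P := fun j => w (e.symm j) with hq
        obtain ⟨r, hr⟩ := key_lemma hm (hint i ε hε0 hε1) hn hScard q
          (fun j => hw1 (e.symm j))
        refine ⟨r, fun a ha => ?_⟩
        have := hr (e ⟨a, ha⟩)
        simp only [hq, Equiv.symm_apply_apply] at this
        exact this.trans (hw2 ⟨a, ha⟩)
end
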